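/- For every 1 ≤ k ≤ n, the Gårding cone Γ_k = {κ ∈ ℝⁿ : s_j(κ) > 0 for all 1 ≤ j ≤ k} is a convex subset of ℝⁿ. -/

import Mathlib

/-- The `k`-th elementary symmetric polynomial of `x ∈ ℝⁿ`. -/
noncomputable def esymm (n k : ℕ) (x : Fin n → ℝ) : ℝ :=
  ∑ S ∈ Finset.powersetCard k (Finset.univ : Finset (Fin n)), ∏ i ∈ S, x i

/-- The Gårding cone `Γₖ = {κ ∈ ℝⁿ : sⱼ(κ) > 0 for all 1 ≤ j ≤ k}`. -/
def gardingCone (n k : ℕ) : Set (Fin n → ℝ) :=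
  {κ | ∀ j : ℕ, 1 ≤ j → j ≤ k → 0 < esymm n j κ}

set_option linter.unusedSectionVars false

namespace Garding
open Polynomial Finset

variable {ι : Type*} [DecidableEq ι] {R : Type*} [CommRing R]

/-- restricted elementary symmetric function -/
def sres (E : Finset ι) (r : ℕ) (y : ι → R) : R :=
  ∑ B ∈ E.powersetCard r, ∏ i ∈ B, y i

/-- the basic polynomial family -/
noncomputable def gpoly (E : Finset ι) (k : ℕ) (α β : ι → R) : R[X] :=
  ∑ S ∈ E.powersetCard k, ∏ i ∈ S, (C (α i) * X + C (β i))

theorem sum_pairs (E : Finset ι) (j m : ℕ) (F : Finset ι → Finset ι → R) :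
    ∑ A ∈ E.powersetCard j, ∑ B ∈ (E \ A).powersetCard m, F A B
      = ∑ B ∈ E.powersetCard m, ∑ A ∈ (E \ B).powersetCard j, F A B := by
  rw [Finset.sum_sigma', Finset.sum_sigma']
  refine Finset.sum_nbij' (fun p => ⟨p.2, p.1⟩) (fun p => ⟨p.2, p.1⟩) ?_ ?_ ?_ ?_ ?_
  · rintro ⟨A, B⟩ hp
    simp only [Finset.mem_sigma, Finset.mem_powersetCard] at hp ⊢
    obtain ⟨⟨hAE, hAc⟩, hBE, hBc⟩ := hp
    have hBE' : B ⊆ E := hBE.trans (Finset.sdiff_subset)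
    refine ⟨⟨hBE', hBc⟩, ?_, hAc⟩
    intro i hi
    simp only [Finset.mem_sdiff]
    refine ⟨hAE hi, fun hiB => ?_⟩
    exact (Finset.mem_sdiff.mp (hBE hiB)).2 hi
  · rintro ⟨B, A⟩ hp
    simp only [Finset.mem_sigma, Finset.mem_powersetCard] at hp ⊢
    obtain ⟨⟨hBE, hBc⟩, hAE, hAc⟩ := hp
    have hAE' : A ⊆ E := hAE.trans (Finset.sdiff_subset)
    refine ⟨⟨hAE', hAc⟩, ?_, hBc⟩
    intro i hi
    simp only [Finset.mem_sdiff]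
    refine ⟨hBE hi, fun hiA => ?_⟩
    exact (Finset.mem_sdiff.mp (hAE hiA)).2 hi
  · rintro ⟨A, B⟩ _; rfl
  · rintro ⟨B, A⟩ _; rfl
  · rintro ⟨A, B⟩ _; rfl

theorem sum_split (E : Finset ι) (k j : ℕ) (hj : j ≤ k) (F : Finset ι → Finset ι → R) :
    ∑ S ∈ E.powersetCard k, ∑ A ∈ S.powersetCard j, F A (S \ A)
      = ∑ A ∈ E.powersetCard j, ∑ B ∈ (E \ A).powersetCard (k - j), F A B := by
  rw [Finset.sum_sigma', Finset.sum_sigma']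
  refine Finset.sum_nbij' (fun p => ⟨p.2, p.1 \ p.2⟩) (fun p => ⟨p.1 ∪ p.2, p.1⟩) ?_ ?_ ?_ ?_ ?_
  · rintro ⟨S, A⟩ hp
    simp only [Finset.mem_sigma, Finset.mem_powersetCard] at hp ⊢
    obtain ⟨⟨hSE, hSc⟩, hAS, hAc⟩ := hp
    refine ⟨⟨hAS.trans hSE, hAc⟩, Finset.sdiff_subset_sdiff hSE (le_refl A), ?_⟩
    rw [Finset.card_sdiff_of_subset hAS, hSc, hAc]
  · rintro ⟨A, B⟩ hp
    simp only [Finset.mem_sigma, Finset.mem_powersetCard] at hp ⊢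
    obtain ⟨⟨hAE, hAc⟩, hBE, hBc⟩ := hp
    have hdisj : Disjoint A B := by
      refine Finset.disjoint_left.mpr fun i hiA hiB => ?_
      exact (Finset.mem_sdiff.mp (hBE hiB)).2 hiA
    have hBE' : B ⊆ E := hBE.trans Finset.sdiff_subset
    refine ⟨⟨Finset.union_subset hAE hBE', ?_⟩, Finset.subset_union_left, hAc⟩
    rw [Finset.card_union_of_disjoint hdisj, hAc, hBc]
    omega
  · rintro ⟨S, A⟩ hp
    simp only [Finset.mem_sigma, Finset.mem_powersetCard] at hp
    obtain ⟨⟨hSE, hSc⟩, hAS, hAc⟩ := hp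
    simp [Finset.union_sdiff_of_subset hAS]
  · rintro ⟨A, B⟩ hp
    simp only [Finset.mem_sigma, Finset.mem_powersetCard] at hp
    obtain ⟨⟨hAE, hAc⟩, hBE, hBc⟩ := hp
    have hdisj : Disjoint A B := by
      refine Finset.disjoint_left.mpr fun i hiA hiB => ?_
      exact (Finset.mem_sdiff.mp (hBE hiB)).2 hiA
    simp [Finset.union_sdiff_cancel_left hdisj]
  · rintro ⟨S, A⟩ _; rfl


theorem sres_zero (E : Finset ι) (y : ι → R) : sres E 0 y = 1 := by
  simp [sres]

theorem prod_linear_eq (S : Finset ι) (α β : ι → R) :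
    ∏ i ∈ S, (C (α i) * X + C (β i))
      = ∑ A ∈ S.powerset, C ((∏ i ∈ A, α i) * ∏ i ∈ S \ A, β i) * X ^ A.card := by
  rw [Finset.prod_add]
  refine Finset.sum_congr rfl fun A hA => ?_
  rw [Finset.prod_mul_distrib, Finset.prod_const]
  rw [← map_prod C α A, ← map_prod C β (S \ A), map_mul]
  ring

theorem coeff_gpoly (E : Finset ι) {k j : ℕ} (hj : j ≤ k) (α β : ι → R) :
    (gpoly E k α β).coeff j
      = ∑ A ∈ E.powersetCard j, (∏ i ∈ A, α i) * sres (E \ A) (k - j) β := by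
  unfold gpoly
  rw [finset_sum_coeff]
  have h1 : ∀ S ∈ E.powersetCard k, (∏ i ∈ S, (C (α i) * X + C (β i))).coeff j
      = ∑ A ∈ S.powersetCard j, (∏ i ∈ A, α i) * ∏ i ∈ S \ A, β i := by
    intro S _
    rw [prod_linear_eq, finset_sum_coeff, Finset.powersetCard_eq_filter, Finset.sum_filter]
    refine Finset.sum_congr rfl fun A _ => ?_
    rw [coeff_C_mul, coeff_X_pow]
    by_cases h : A.card = j
    · simp [h]
    · have : ¬ (j = A.card) := fun hh => h hh.symm
      simp [h, this]
  rw [Finset.sum_congr rfl h1, sum_split E k j hj (fun A B => (∏ i ∈ A, α i) * ∏ i ∈ B, β i)]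
  refine Finset.sum_congr rfl fun A _ => ?_
  rw [sres, Finset.mul_sum]

theorem natDegree_gpoly_le (E : Finset ι) (k : ℕ) (α β : ι → R) :
    (gpoly E k α β).natDegree ≤ k := by
  refine natDegree_sum_le_of_forall_le _ _ fun S hS => ?_
  have hc : S.card = k := (Finset.mem_powersetCard.mp hS).2
  refine le_trans (natDegree_prod_le _ _) (le_trans (Finset.sum_le_sum
    (fun i (_ : i ∈ S) => (natDegree_linear_le : (C (α i) * X + C (β i)).natDegree ≤ 1))) ?_)
  rw [Finset.sum_const, smul_eq_mul, mul_one, hc]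

theorem coeff_gpoly_self (E : Finset ι) (k : ℕ) (α β : ι → R) :
    (gpoly E k α β).coeff k = sres E k α := by
  rw [coeff_gpoly E (le_refl k) α β, sres]
  refine Finset.sum_congr rfl fun A _ => ?_
  rw [Nat.sub_self, sres_zero, mul_one]

theorem eval_gpoly (E : Finset ι) (k : ℕ) (α β : ι → R) (t : R) :
    (gpoly E k α β).eval t = ∑ S ∈ E.powersetCard k, ∏ i ∈ S, (α i * t + β i) := by
  simp [gpoly, eval_finset_sum, eval_prod]

theorem map_gpoly {S' : Type*} [CommRing S'] (f : R →+* S') (E : Finset ι) (k : ℕ)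
    (α β : ι → R) :
    (gpoly E k α β).map f = gpoly E k (fun i => f (α i)) (fun i => f (β i)) := by
  simp [gpoly, Polynomial.map_sum, Polynomial.map_prod]

theorem sres_count (E : Finset ι) (j m : ℕ) (y : ι → R) :
    ∑ A ∈ E.powersetCard j, sres (E \ A) m y
      = ((E.card - m).choose j : R) * sres E m y := by
  unfold sres
  rw [sum_pairs E j m (fun _ B => ∏ i ∈ B, y i), Finset.mul_sum]
  refine Finset.sum_congr rfl fun B hB => ?_
  obtain ⟨hBE, hBc⟩ := Finset.mem_powersetCard.mp hB
  rw [Finset.sum_const, Finset.card_powersetCard, Finset.card_sdiff_of_subset hBE, hBc,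
    nsmul_eq_mul]

theorem coeff_gpoly_one (E : Finset ι) {r j : ℕ} (hj : j ≤ r) (y : ι → R) :
    (gpoly E r (fun _ => 1) y).coeff j
      = ((E.card - (r - j)).choose j : R) * sres E (r - j) y := by
  rw [coeff_gpoly E hj (fun _ => 1) y]
  simp only [Finset.prod_const_one, one_mul]
  exact sres_count E j (r - j) y


theorem sres_one (E : Finset ι) (r : ℕ) :
    sres E r (fun _ => (1 : R)) = (E.card.choose r : R) := by
  simp [sres, Finset.card_powersetCard]

theorem gpoly_one_eq (E : Finset ι) (r : ℕ) (y : ι → R) :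
    gpoly E r (fun _ => 1) y = ∑ S ∈ E.powersetCard r, ∏ i ∈ S, (X + C (y i)) := by
  simp [gpoly]

theorem derivative_gpoly_one (E : Finset ι) {r : ℕ} (hr : 1 ≤ r) (y : ι → R) :
    derivative (gpoly E r (fun _ => 1) y)
      = (E.card - (r - 1)).choose 1 • gpoly E (r - 1) (fun _ => 1) y := by
  rw [gpoly_one_eq, gpoly_one_eq, derivative_sum]
  have h1 : ∀ S ∈ E.powersetCard r, derivative (∏ i ∈ S, (X + C (y i)))
      = ∑ A ∈ S.powersetCard 1, ∏ j ∈ S \ A, (X + C (y j)) := by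
    intro S _
    rw [Finset.prod_eq_multiset_prod, derivative_prod]
    rw [Finset.powersetCard_one, Finset.sum_map]
    have : ∀ i ∈ S.val, (Multiset.map (fun i => X + C (y i)) (S.val.erase i)).prod
          * derivative (X + C (y i))
        = ((S.erase i).val.map (fun i => X + C (y i))).prod := by
      intro i _
      rw [derivative_add, derivative_X, derivative_C, add_zero, mul_one, Finset.erase_val]
    rw [Multiset.map_congr rfl this]
    rw [← Finset.sum_eq_multiset_sum]
    refine Finset.sum_congr rfl fun i hi => ?_
    have : S \ {i} = S.erase i := by
      ext j; simp [Finset.mem_sdiff, Finset.mem_erase, and_comm]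
    simp only [Function.Embedding.coeFn_mk, this]
    rw [Finset.prod_eq_multiset_prod, Finset.erase_val]
  rw [Finset.sum_congr rfl h1,
    sum_split E r 1 hr (fun _ B => ∏ j ∈ B, (X + C (y j))),
    sum_pairs E 1 (r - 1) (fun _ B => ∏ j ∈ B, (X + C (y j))), Finset.smul_sum]
  refine Finset.sum_congr rfl fun B hB => ?_
  obtain ⟨hBE, hBc⟩ := Finset.mem_powersetCard.mp hB
  rw [Finset.sum_const, Finset.card_powersetCard, Finset.card_sdiff_of_subset hBE, hBc,
    Nat.choose_one_right]

theorem natDegree_gpoly_eq (E : Finset ι) (k : ℕ) (α β : ι → R)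
    (h : sres E k α ≠ 0) : (gpoly E k α β).natDegree = k :=
  le_antisymm (natDegree_gpoly_le E k α β)
    (le_natDegree_of_ne_zero (by rwa [coeff_gpoly_self]))

theorem gpoly_ne_zero (E : Finset ι) (k : ℕ) (α β : ι → R)
    (h : sres E k α ≠ 0) : gpoly E k α β ≠ 0 := by
  intro h0
  apply h
  rw [← coeff_gpoly_self E k α β, h0, coeff_zero]

theorem leadingCoeff_gpoly (E : Finset ι) (k : ℕ) (α β : ι → R)
    (h : sres E k α ≠ 0) : (gpoly E k α β).leadingCoeff = sres E k α := by
  rw [leadingCoeff, natDegree_gpoly_eq E k α β h, coeff_gpoly_self]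

theorem sres_one_ne_zero {F : Type*} [Field F] [CharZero F] (E : Finset ι) {r : ℕ}
    (hr : r ≤ E.card) :
    sres E r (fun _ => (1 : F)) ≠ 0 := by
  rw [sres_one]
  exact_mod_cast (Nat.choose_pos hr).ne'

theorem card_roots_gpoly_one_aux (E : Finset ι) (y : ι → ℝ) :
    ∀ d, d ≤ E.card →
      Multiset.card (gpoly E (E.card - d) (fun _ => 1) y).roots = E.card - d := by
  intro d
  induction d with
  | zero =>
    intro _
    rw [Nat.sub_zero, gpoly_one_eq, Finset.powersetCard_self, Finset.sum_singleton]
    have hne : ∏ i ∈ E, (X + C (y i)) ≠ 0 :=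
      Monic.ne_zero (monic_prod_of_monic _ _ fun i _ => monic_X_add_C (y i))
    rw [roots_prod _ _ hne]
    have hXC : ∀ i, (X + C (y i)).roots = {-(y i)} := by
      intro i
      have : X + C (y i) = X - C (-(y i)) := by rw [map_neg, sub_neg_eq_add]
      rw [this, roots_X_sub_C]
    rw [Multiset.card_bind]
    have : Multiset.map (Multiset.card ∘ fun i => (X + C (y i)).roots) E.val
        = Multiset.map (fun _ => 1) E.val := by
      refine Multiset.map_congr rfl fun i _ => ?_
      rw [Function.comp_apply, hXC i, Multiset.card_singleton]
    rw [this, Multiset.map_const', Multiset.sum_replicate, smul_eq_mul, mul_one]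
    rfl
  | succ d ih =>
    intro hd
    have h := ih (Nat.le_of_succ_le hd)
    set r := E.card - d with hrdef
    have hr1 : 1 ≤ r := by omega
    have hle := card_roots_le_derivative (gpoly E r (fun _ => (1:ℝ)) y)
    rw [derivative_gpoly_one E hr1 y] at hle
    have hm : ((E.card - (r - 1)).choose 1 : ℝ) ≠ 0 := by
      rw [Nat.choose_one_right]
      exact_mod_cast (by omega : 0 < E.card - (r - 1)).ne'
    rw [nsmul_eq_mul, ← map_natCast (C : ℝ →+* ℝ[X]), roots_C_mul _ hm] at hle
    have hub : Multiset.card (gpoly E (r - 1) (fun _ => (1:ℝ)) y).roots ≤ r - 1 :=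
      le_trans (card_roots' _) (natDegree_gpoly_le E (r - 1) _ y)
    have : E.card - (d + 1) = r - 1 := by omega
    rw [this]
    omega

theorem card_roots_gpoly_one (E : Finset ι) {k : ℕ} (hk : k ≤ E.card) (y : ι → ℝ) :
    Multiset.card (gpoly E k (fun _ => 1) y).roots = k := by
  have := card_roots_gpoly_one_aux E y (E.card - k) (by omega)
  rwa [Nat.sub_sub_self hk] at this

theorem splits_gpoly_one (E : Finset ι) {k : ℕ} (hk : k ≤ E.card) (y : ι → ℝ) :
    Splits (gpoly E k (fun _ => 1) y) := by
  rw [splits_iff_card_roots, card_roots_gpoly_one E hk y,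
    natDegree_gpoly_eq E k _ y (sres_one_ne_zero E hk)]

theorem roots_map_gpoly_one (E : Finset ι) {k : ℕ} (hk : k ≤ E.card) (y : ι → ℝ) :
    ((gpoly E k (fun _ => 1) y).map Complex.ofRealHom).roots
      = (gpoly E k (fun _ => 1) y).roots.map (⇑Complex.ofRealHom) :=
  (splits_gpoly_one E hk y).roots_map Complex.ofRealHom

theorem im_eq_zero_of_root_map_gpoly_one (E : Finset ι) {k : ℕ} (hk : k ≤ E.card)
    (y : ι → ℝ) {z : ℂ}
    (hz : z ∈ ((gpoly E k (fun _ => 1) y).map Complex.ofRealHom).roots) : z.im = 0 := by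
  rw [roots_map_gpoly_one E hk y] at hz
  obtain ⟨r, _, hr⟩ := Multiset.mem_map.mp hz
  rw [← hr]
  exact Complex.ofReal_im r

theorem card_roots_map_gpoly_one (E : Finset ι) {k : ℕ} (hk : k ≤ E.card) (y : ι → ℝ) :
    Multiset.card ((gpoly E k (fun _ => 1) y).map Complex.ofRealHom).roots
      = ((gpoly E k (fun _ => 1) y).map Complex.ofRealHom).natDegree := by
  rw [roots_map_gpoly_one E hk y, Multiset.card_map, card_roots_gpoly_one E hk y,
    natDegree_map_eq_of_injective Complex.ofRealHom.injective,
    natDegree_gpoly_eq E k _ y (sres_one_ne_zero E hk)]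

theorem eval_map_gpoly_one_ne_zero (E : Finset ι) {k : ℕ} (hk : k ≤ E.card)
    (y : ι → ℝ) {u : ℂ} (hu : u.im ≠ 0) :
    eval u ((gpoly E k (fun _ => 1) y).map Complex.ofRealHom) ≠ 0 := by
  intro h0
  have hpne : (gpoly E k (fun _ => (1:ℝ)) y).map Complex.ofRealHom ≠ 0 := by
    rw [Polynomial.map_ne_zero_iff Complex.ofRealHom.injective]
    exact gpoly_ne_zero E k _ y (sres_one_ne_zero E hk)
  have hfac := C_leadingCoeff_mul_prod_multiset_X_sub_C (card_roots_map_gpoly_one E hk y)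
  rw [← hfac, eval_mul, eval_C] at h0
  rcases mul_eq_zero.mp h0 with h | h
  · exact (leadingCoeff_ne_zero.mpr hpne) h
  · rw [eval_multiset_prod, Multiset.map_map] at h
    obtain ha := Multiset.prod_eq_zero_iff.mp h
    obtain ⟨a, ha1, ha2⟩ := Multiset.mem_map.mp ha
    rw [Function.comp_apply, eval_sub, eval_X, eval_C, sub_eq_zero] at ha2
    apply hu
    rw [ha2]
    exact im_eq_zero_of_root_map_gpoly_one E hk y ha1


section Analytic

/-- compatibility: the complex absolute value as an `AbsoluteValue` (the norm) -/
noncomputable def Complex.abs : AbsoluteValue ℂ ℝ where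
  toFun z := ‖z‖
  map_mul' := norm_mul
  nonneg' := norm_nonneg
  eq_zero' _ := norm_eq_zero
  add_le' := norm_add_le

theorem Complex.norm_eq_abs (z : ℂ) : ‖z‖ = Complex.abs z := rfl

theorem Complex.abs_ofReal (r : ℝ) : Complex.abs (r : ℂ) = |r| := Complex.norm_real r

theorem Complex.abs_im_le_abs (z : ℂ) : |z.im| ≤ Complex.abs z := Complex.abs_im_le_norm z

theorem Complex.continuous_abs : Continuous Complex.abs := continuous_norm

theorem map_sres {S' : Type*} [CommRing S'] (f : R →+* S') (E : Finset ι) (r : ℕ)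
    (y : ι → R) : f (sres E r y) = sres E r (fun i => f (y i)) := by
  simp [sres, map_sum, map_prod]

theorem norm_sres_le (E : Finset ι) (r : ℕ) (y : ι → ℂ) (g : ι → ℝ)
    (hg : ∀ i ∈ E, Complex.abs (y i) ≤ g i) :
    Complex.abs (sres E r y) ≤ sres E r g := by
  refine le_trans (Complex.abs.sum_le _ _) (Finset.sum_le_sum fun B hB => ?_)
  have hBE : B ⊆ E := (Finset.mem_powersetCard.mp hB).1
  rw [map_prod]
  exact Finset.prod_le_prod (fun i _ => AbsoluteValue.nonneg _ _)
    (fun i hi => hg i (hBE hi))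

/-- crude Cauchy-type root bound -/
theorem abs_root_le {p : ℂ[X]} {d : ℕ} (hd : p.natDegree = d) {z : ℂ}
    (hz : eval z p = 0) (hlc : p.coeff d ≠ 0) :
    Complex.abs z ≤ max 1 ((∑ j ∈ Finset.range d, Complex.abs (p.coeff j)) / Complex.abs (p.coeff d)) := by
  rcases le_or_gt (Complex.abs z) 1 with h1 | h1
  · exact le_trans h1 (le_max_left _ _)
  refine le_trans ?_ (le_max_right _ _)
  have hd1 : 1 ≤ d := by
    by_contra hd0
    have : d = 0 := by omega
    subst this
    rw [eval_eq_sum_range, hd] at hz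
    simp at hz
    exact hlc hz
  have heval : eval z p = ∑ i ∈ Finset.range (d + 1), p.coeff i * z ^ i := by
    rw [eval_eq_sum_range, hd]
  rw [Finset.sum_range_succ] at heval
  have hkey : p.coeff d * z ^ d = -∑ i ∈ Finset.range d, p.coeff i * z ^ i := by
    rw [hz] at heval
    linear_combination -heval
  have habs : Complex.abs (p.coeff d) * Complex.abs z ^ d
      ≤ (∑ j ∈ Finset.range d, Complex.abs (p.coeff j)) * Complex.abs z ^ (d - 1) := by
    calc Complex.abs (p.coeff d) * Complex.abs z ^ d
        = Complex.abs (p.coeff d * z ^ d) := by rw [map_mul, map_pow]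
      _ = Complex.abs (∑ i ∈ Finset.range d, p.coeff i * z ^ i) := by
          rw [hkey, AbsoluteValue.map_neg]
      _ ≤ ∑ i ∈ Finset.range d, Complex.abs (p.coeff i * z ^ i) :=
          Complex.abs.sum_le _ _
      _ ≤ ∑ i ∈ Finset.range d, Complex.abs (p.coeff i) * Complex.abs z ^ (d - 1) := by
          refine Finset.sum_le_sum fun i hi => ?_
          rw [map_mul, map_pow]
          refine mul_le_mul_of_nonneg_left ?_ (AbsoluteValue.nonneg _ _)
          exact pow_le_pow_right₀ (le_of_lt h1) (by
            have := Finset.mem_range.mp hi; omega)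
      _ = (∑ j ∈ Finset.range d, Complex.abs (p.coeff j)) * Complex.abs z ^ (d - 1) := by
          rw [Finset.sum_mul]
  have hzpow : Complex.abs z ^ d = Complex.abs z ^ (d - 1) * Complex.abs z := by
    rw [← pow_succ]
    congr 1
    omega
  have hpowpos : 0 < Complex.abs z ^ (d - 1) := pow_pos (lt_trans one_pos h1) _
  have hlcpos : 0 < Complex.abs (p.coeff d) := AbsoluteValue.pos _ hlc
  rw [hzpow, ← mul_assoc] at habs
  rw [le_div_iff₀ hlcpos]
  refine le_of_mul_le_mul_right ?_ hpowpos
  calc Complex.abs z * Complex.abs (p.coeff d) * Complex.abs z ^ (d - 1)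
      = Complex.abs (p.coeff d) * Complex.abs z ^ (d - 1) * Complex.abs z := by ring
    _ ≤ (∑ j ∈ Finset.range d, Complex.abs (p.coeff j)) * Complex.abs z ^ (d - 1) := habs

theorem prod_abs_lower {s : Multiset ℂ} {c : ℝ} (hc : 0 ≤ c)
    (h : ∀ z ∈ s, c ≤ Complex.abs z) :
    c ^ Multiset.card s ≤ Complex.abs s.prod := by
  induction s using Multiset.induction with
  | empty => simp
  | cons a s ih =>
    rw [Multiset.prod_cons, Multiset.card_cons, map_mul, pow_succ']
    exact mul_le_mul (h a (Multiset.mem_cons_self a s))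
      (ih fun z hz => h z (Multiset.mem_cons_of_mem hz))
      (pow_nonneg hc _) (AbsoluteValue.nonneg _ _)

theorem eval_abs_lower {p : ℂ[X]} (hc : Multiset.card p.roots = p.natDegree)
    {t : ℂ} (him : ∀ z ∈ p.roots, z.im ≤ 0) (ht : 0 ≤ t.im) :
    Complex.abs p.leadingCoeff * t.im ^ p.natDegree ≤ Complex.abs (eval t p) := by
  conv_rhs => rw [← C_leadingCoeff_mul_prod_multiset_X_sub_C hc]
  rw [eval_mul, eval_C, map_mul, eval_multiset_prod, Multiset.map_map]
  refine mul_le_mul_of_nonneg_left ?_ (AbsoluteValue.nonneg _ _)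
  have hmc : Multiset.map (eval t ∘ fun a => X - C a) p.roots
      = Multiset.map (fun a => t - a) p.roots := by
    refine Multiset.map_congr rfl fun z _ => ?_
    simp
  rw [hmc, ← hc, ← Multiset.card_map (fun a => t - a) p.roots]
  refine prod_abs_lower ht fun w hw => ?_
  obtain ⟨z, hz, rfl⟩ := Multiset.mem_map.mp hw
  calc t.im ≤ (t - z).im := by
        rw [Complex.sub_im]
        have := him z hz
        linarith
    _ ≤ |(t - z).im| := le_abs_self _
    _ ≤ Complex.abs (t - z) := Complex.abs_im_le_abs _

theorem eval_conj_map (p : ℝ[X]) (z : ℂ) :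
    eval ((starRingEnd ℂ) z) (p.map Complex.ofRealHom)
      = (starRingEnd ℂ) (eval z (p.map Complex.ofRealHom)) := by
  rw [eval_map, eval_map, hom_eval₂]
  congr 1
  ext r
  simp [Complex.conj_ofReal]

end Analytic

section Homotopy

variable {n : ℕ}

/-- The deformation family `σ ↦ s_k(σ•x + t•a + u•e)` as a polynomial in `t` over `ℂ`. -/
noncomputable def hfam (k : ℕ) (a x : Fin n → ℝ) (u : ℂ) (σ : ℝ) : ℂ[X] :=
  gpoly Finset.univ k (fun i => (a i : ℂ)) (fun i => ((σ * x i : ℝ) : ℂ) + u)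

theorem card_univ_fin : (Finset.univ : Finset (Fin n)).card = n := by simp

theorem sres_cast (r : ℕ) (y : Fin n → ℝ) :
    sres Finset.univ r (fun i => (y i : ℂ)) = ((sres Finset.univ r y : ℝ) : ℂ) := by
  have := map_sres Complex.ofRealHom (Finset.univ : Finset (Fin n)) r y
  simpa [Complex.ofRealHom_eq_coe] using this.symm

theorem eval_pos_of_coeff_nonneg (p : ℝ[X]) (h : ∀ j, j ≤ p.natDegree → 0 ≤ p.coeff j)
    (h0 : 0 < p.coeff 0) {T : ℝ} (hT : 0 ≤ T) : 0 < eval T p := by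
  rw [eval_eq_sum_range]
  refine Finset.sum_pos' (fun i hi => ?_) ⟨0, ?_, ?_⟩
  · refine mul_nonneg (h i ?_) (pow_nonneg hT i)
    have := Finset.mem_range.mp hi
    omega
  · exact Finset.mem_range.mpr (by omega)
  · simpa using h0

theorem eval_gpoly_one_pos {k : ℕ} (hkn : k ≤ n) (y : Fin n → ℝ)
    (hy : ∀ m, 1 ≤ m → m ≤ k → 0 < sres Finset.univ m y) {T : ℝ} (hT : 0 ≤ T) :
    0 < eval T (gpoly Finset.univ k (fun _ => 1) y) := by
  have hy' : ∀ m, m ≤ k → 0 < sres Finset.univ m y := by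
    intro m hm
    rcases Nat.eq_zero_or_pos m with h | h
    · subst h; rw [sres_zero]; norm_num
    · exact hy m h hm
  have hk' : k ≤ (Finset.univ : Finset (Fin n)).card := by rwa [card_univ_fin]
  have hnd : (gpoly Finset.univ k (fun _ => (1:ℝ)) y).natDegree = k :=
    natDegree_gpoly_eq _ _ _ _ (sres_one_ne_zero _ hk')
  refine eval_pos_of_coeff_nonneg _ (fun j hj => ?_) ?_ hT
  · rw [hnd] at hj
    rw [coeff_gpoly_one _ hj]
    refine mul_nonneg (by positivity) (le_of_lt (hy' _ (by omega)))
  · rw [coeff_gpoly_one _ (Nat.zero_le k)]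
    simp only [Nat.sub_zero, Nat.choose_zero_right, Nat.cast_one, one_mul]
    exact hy' k le_rfl

theorem hfam_eval_real (k : ℕ) (a x : Fin n → ℝ) (u : ℂ) (σ : ℝ) (w : ℝ) :
    eval ((w : ℝ) : ℂ) (hfam k a x u σ)
      = eval u ((gpoly Finset.univ k (fun _ => 1)
          (fun i => σ * x i + w * a i)).map Complex.ofRealHom) := by
  rw [hfam, map_gpoly, eval_gpoly, eval_gpoly]
  refine Finset.sum_congr rfl fun S _ => Finset.prod_congr rfl fun i _ => ?_
  simp only [Complex.ofRealHom_eq_coe]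
  push_cast
  ring

theorem hfam_ne_zero_of_real {k : ℕ} (hkn : k ≤ n) (a x : Fin n → ℝ) {u : ℂ} (σ : ℝ)
    (hu : u.im ≠ 0) {z : ℂ} (hz : z.im = 0) : eval z (hfam k a x u σ) ≠ 0 := by
  have hzre : z = ((z.re : ℝ) : ℂ) := by
    apply Complex.ext <;> simp [hz]
  rw [hzre, hfam_eval_real]
  exact eval_map_gpoly_one_ne_zero _ (by rwa [card_univ_fin]) _ hu

theorem coeff_hfam_bound (k : ℕ) (a x : Fin n → ℝ) (u : ℂ) {j : ℕ} (hj : j ≤ k)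
    {σ : ℝ} (h0 : 0 ≤ σ) (h1 : σ ≤ 1) :
    Complex.abs ((hfam k a x u σ).coeff j)
      ≤ ∑ A ∈ Finset.powersetCard j (Finset.univ : Finset (Fin n)),
          (∏ i ∈ A, |a i|) * sres (Finset.univ \ A) (k - j) (fun i => |x i| + Complex.abs u) := by
  rw [hfam, coeff_gpoly _ hj]
  refine le_trans (Complex.abs.sum_le _ _) (Finset.sum_le_sum fun A _ => ?_)
  rw [map_mul, map_prod]
  have hprodeq : ∏ i ∈ A, Complex.abs ((a i : ℂ)) = ∏ i ∈ A, |a i| :=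
    Finset.prod_congr rfl fun i _ => Complex.abs_ofReal _
  rw [hprodeq]
  refine mul_le_mul_of_nonneg_left ?_ (Finset.prod_nonneg fun i _ => abs_nonneg _)
  refine norm_sres_le _ _ _ _ fun i _ => ?_
  calc Complex.abs (((σ * x i : ℝ) : ℂ) + u)
      ≤ Complex.abs ((σ * x i : ℝ) : ℂ) + Complex.abs u := Complex.abs.add_le _ _
    _ ≤ |x i| + Complex.abs u := by
        rw [Complex.abs_ofReal, abs_mul]
        refine add_le_add ?_ le_rfl
        calc |σ| * |x i| ≤ 1 * |x i| :=
              mul_le_mul_of_nonneg_right (by rwa [abs_of_nonneg h0]) (abs_nonneg _)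
          _ = |x i| := one_mul _

theorem hfam_roots_bounded (k : ℕ) (a x : Fin n → ℝ) (u : ℂ) (hk1 : 1 ≤ k)
    (hka : sres Finset.univ k a ≠ 0) :
    ∃ Rb : ℝ, ∀ σ : ℝ, 0 ≤ σ → σ ≤ 1 → ∀ z ∈ (hfam k a x u σ).roots,
      Complex.abs z ≤ Rb := by
  have hca : sres Finset.univ k (fun i => (a i : ℂ)) ≠ 0 := by
    rw [sres_cast]; exact_mod_cast hka
  refine ⟨max 1 ((∑ j ∈ Finset.range k, ∑ A ∈ Finset.powersetCard j (Finset.univ : Finset (Fin n)),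
      (∏ i ∈ A, |a i|) * sres (Finset.univ \ A) (k - j) (fun i => |x i| + Complex.abs u))
        / Complex.abs ((sres Finset.univ k a : ℝ) : ℂ)), ?_⟩
  intro σ h0 h1 z hz
  rw [hfam] at hz
  have hroot : eval z (hfam k a x u σ) = 0 := by
    rw [hfam]
    exact (mem_roots (gpoly_ne_zero _ _ _ _ hca)).mp hz
  have hlc : (hfam k a x u σ).coeff k ≠ 0 := by
    rw [hfam, coeff_gpoly_self]
    exact hca
  have hnd : (hfam k a x u σ).natDegree = k := natDegree_gpoly_eq _ _ _ _ hca
  refine le_trans (abs_root_le hnd hroot hlc) (max_le_max le_rfl ?_)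
  have hcoeffk : (hfam k a x u σ).coeff k = ((sres Finset.univ k a : ℝ) : ℂ) := by
    rw [hfam, coeff_gpoly_self, sres_cast]
  rw [hcoeffk]
  have hL : 0 < Complex.abs ((sres Finset.univ k a : ℝ) : ℂ) :=
    AbsoluteValue.pos _ (by exact_mod_cast hka)
  refine (div_le_div_iff_of_pos_right hL).mpr (Finset.sum_le_sum fun j hj => ?_)
  exact coeff_hfam_bound k a x u (le_of_lt (Finset.mem_range.mp hj)) h0 h1

theorem continuous_hfam_eval (k : ℕ) (a x : Fin n → ℝ) (u : ℂ) :
    Continuous (fun p : ℝ × ℂ => eval p.2 (hfam k a x u p.1)) := by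
  have heq : (fun p : ℝ × ℂ => eval p.2 (hfam k a x u p.1))
      = fun p : ℝ × ℂ => ∑ S ∈ Finset.powersetCard k (Finset.univ : Finset (Fin n)),
          ∏ i ∈ S, ((a i : ℂ) * p.2 + (((p.1 * x i : ℝ) : ℂ) + u)) := by
    funext p
    rw [hfam, eval_gpoly]
  rw [heq]
  refine continuous_finset_sum _ fun S _ => continuous_finset_prod _ fun i _ => ?_
  exact (continuous_const.mul continuous_snd).add ((Complex.continuous_ofReal.comp
    (continuous_fst.mul continuous_const)).add continuous_const)

theorem hfam_zero_root_im {k : ℕ} (hk1 : 1 ≤ k) (hkn : k ≤ n) (a x : Fin n → ℝ)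
    (ha : ∀ j, 1 ≤ j → j ≤ k → 0 < sres Finset.univ j a)
    {u : ℂ} (hu : 0 < u.im) {z : ℂ} (hz : z ∈ (hfam k a x u 0).roots) : z.im < 0 := by
  have hka : sres Finset.univ k a ≠ 0 := (ha k hk1 le_rfl).ne'
  have hca : sres Finset.univ k (fun i => (a i : ℂ)) ≠ 0 := by
    rw [sres_cast]; exact_mod_cast hka
  have hkn' : k ≤ (Finset.univ : Finset (Fin n)).card := by rwa [card_univ_fin]
  have hune : u ≠ 0 := by
    intro h; rw [h] at hu; simp at hu
  rw [hfam] at hz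
  have hroot : eval z (gpoly Finset.univ k (fun i => (a i : ℂ))
      (fun i => (((0:ℝ) * x i : ℝ) : ℂ) + u)) = 0 :=
    (mem_roots (gpoly_ne_zero _ _ _ _ hca)).mp hz
  have hzne : z ≠ 0 := by
    rintro rfl
    rw [eval_gpoly] at hroot
    have hconst : ∀ S ∈ Finset.powersetCard k (Finset.univ : Finset (Fin n)),
        ∏ i ∈ S, ((a i : ℂ) * 0 + ((((0:ℝ) * x i : ℝ) : ℂ) + u)) = u ^ k := by
      intro S hS
      have hcard := (Finset.mem_powersetCard.mp hS).2
      have : ∀ i ∈ S, ((a i : ℂ) * 0 + ((((0:ℝ) * x i : ℝ) : ℂ) + u)) = u := by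
        intro i _
        push_cast
        ring
      rw [Finset.prod_congr rfl this, Finset.prod_const, hcard]
    rw [Finset.sum_congr rfl hconst, Finset.sum_const, nsmul_eq_mul] at hroot
    rcases mul_eq_zero.mp hroot with h | h
    · rw [Finset.card_powersetCard] at h
      have : (Finset.univ : Finset (Fin n)).card.choose k ≠ 0 := (Nat.choose_pos hkn').ne'
      exact this (by exact_mod_cast h)
    · exact hune (pow_eq_zero_iff (by omega) |>.mp h)
  set v := u / z with hv
  have hvroot : eval v ((gpoly Finset.univ k (fun _ => 1) a).map Complex.ofRealHom) = 0 := by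
    have hiden : eval z (gpoly Finset.univ k (fun i => (a i : ℂ))
        (fun i => (((0:ℝ) * x i : ℝ) : ℂ) + u))
        = z ^ k * eval v ((gpoly Finset.univ k (fun _ => 1) a).map Complex.ofRealHom) := by
      rw [map_gpoly, eval_gpoly, eval_gpoly, Finset.mul_sum]
      refine Finset.sum_congr rfl fun S hS => ?_
      have hcard := (Finset.mem_powersetCard.mp hS).2
      rw [← hcard, ← Finset.prod_const z, ← Finset.prod_mul_distrib]
      refine Finset.prod_congr rfl fun i _ => ?_
      simp only [Complex.ofRealHom_eq_coe, hv]
      push_cast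
      field_simp
      ring
    rw [hiden] at hroot
    rcases mul_eq_zero.mp hroot with h | h
    · exact absurd (pow_eq_zero_iff (by omega) |>.mp h) hzne
    · exact h
  have hmapne : (gpoly Finset.univ k (fun _ => (1:ℝ)) a).map Complex.ofRealHom ≠ 0 := by
    rw [Polynomial.map_ne_zero_iff Complex.ofRealHom.injective]
    exact gpoly_ne_zero _ _ _ _ (sres_one_ne_zero _ hkn')
  have hvmem : v ∈ ((gpoly Finset.univ k (fun _ => 1) a).map Complex.ofRealHom).roots :=
    (mem_roots hmapne).mpr hvroot
  rw [roots_map_gpoly_one _ hkn' a] at hvmem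
  obtain ⟨ρ, hρmem, hρ⟩ := Multiset.mem_map.mp hvmem
  have hρroot : eval ρ (gpoly Finset.univ k (fun _ => 1) a) = 0 := by
    have := (mem_roots (gpoly_ne_zero _ _ _ _ (sres_one_ne_zero _ hkn'))).mp hρmem
    exact this
  have hρneg : ρ < 0 := by
    by_contra hge
    push_neg at hge
    exact absurd hρroot (ne_of_gt (eval_gpoly_one_pos hkn a ha hge))
  have hvne : v ≠ 0 := by
    rw [← hρ]
    simp only [Complex.ofRealHom_eq_coe, ne_eq, Complex.ofReal_eq_zero]
    exact hρneg.ne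
  have hvz : z = u * ((ρ : ℂ))⁻¹ := by
    have h1 : v * z = u := by
      rw [hv, div_mul_cancel₀ _ hzne]
    rw [← hρ] at h1
    simp only [Complex.ofRealHom_eq_coe] at h1
    field_simp [Complex.ofReal_eq_zero.not.mpr hρneg.ne] at h1 ⊢
    linear_combination h1
  have him : z.im = u.im * ρ⁻¹ := by
    rw [hvz, ← Complex.ofReal_inv, Complex.mul_im]
    simp
  rw [him]
  exact mul_neg_of_pos_of_neg hu (by simpa using inv_lt_zero.mpr hρneg)

theorem hfam_ne_zero (k : ℕ) (a x : Fin n → ℝ) (u : ℂ) (σ : ℝ)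
    (hca : sres Finset.univ k (fun i => (a i : ℂ)) ≠ 0) : hfam k a x u σ ≠ 0 := by
  rw [hfam]; exact gpoly_ne_zero _ _ _ _ hca

theorem mem_roots_hfam {k : ℕ} {a x : Fin n → ℝ} {u : ℂ} {σ : ℝ} {z : ℂ}
    (hca : sres Finset.univ k (fun i => (a i : ℂ)) ≠ 0) :
    z ∈ (hfam k a x u σ).roots ↔ eval z (hfam k a x u σ) = 0 := by
  rw [mem_roots (hfam_ne_zero k a x u σ hca)]
  exact Iff.rfl

theorem natDegree_hfam {k : ℕ} (a x : Fin n → ℝ) (u : ℂ) (σ : ℝ)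
    (hca : sres Finset.univ k (fun i => (a i : ℂ)) ≠ 0) :
    (hfam k a x u σ).natDegree = k := by
  rw [hfam]; exact natDegree_gpoly_eq _ _ _ _ hca

theorem leadingCoeff_hfam {k : ℕ} (a x : Fin n → ℝ) (u : ℂ) (σ : ℝ)
    (hca : sres Finset.univ k (fun i => (a i : ℂ)) ≠ 0) :
    (hfam k a x u σ).leadingCoeff = ((sres Finset.univ k a : ℝ) : ℂ) := by
  rw [hfam, leadingCoeff_gpoly _ _ _ _ hca, sres_cast]

theorem card_roots_hfam (k : ℕ) (a x : Fin n → ℝ) (u : ℂ) (σ : ℝ) :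
    Multiset.card (hfam k a x u σ).roots = (hfam k a x u σ).natDegree :=
  splits_iff_card_roots.mp (IsAlgClosed.splits _)

theorem hfam_roots_im_neg {k : ℕ} (hk1 : 1 ≤ k) (hkn : k ≤ n) (a x : Fin n → ℝ)
    (ha : ∀ j, 1 ≤ j → j ≤ k → 0 < sres Finset.univ j a)
    {u : ℂ} (hu : 0 < u.im) :
    ∀ σ : ℝ, 0 ≤ σ → σ ≤ 1 → ∀ z ∈ (hfam k a x u σ).roots, z.im < 0 := by
  have hka : sres Finset.univ k a ≠ 0 := (ha k hk1 le_rfl).ne'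
  have hca : sres Finset.univ k (fun i => (a i : ℂ)) ≠ 0 := by
    rw [sres_cast]; exact_mod_cast hka
  have huim : u.im ≠ 0 := hu.ne'
  by_contra hcon
  push_neg at hcon
  obtain ⟨σ₀, hσ₀0, hσ₀1, z₀, hz₀, hz₀im⟩ := hcon
  set Bad : Set ℝ := {σ | (0 ≤ σ ∧ σ ≤ 1) ∧ ∃ z ∈ (hfam k a x u σ).roots, 0 ≤ z.im}
    with hBaddef
  have hσ₀mem : σ₀ ∈ Bad := ⟨⟨hσ₀0, hσ₀1⟩, z₀, hz₀, hz₀im⟩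
  have hBadne : Bad.Nonempty := ⟨σ₀, hσ₀mem⟩
  have hBadbdd : BddBelow Bad := ⟨0, fun σ hσ => hσ.1.1⟩
  obtain ⟨Rb, hRb⟩ := hfam_roots_bounded k a x u hk1 hka
  obtain ⟨sq, -, hsqtend, hsqmem⟩ := exists_seq_tendsto_sInf hBadne hBadbdd
  choose zs hzsroot hzsim using fun m => (hsqmem m).2
  have hzsball : ∀ m, zs m ∈ Metric.closedBall (0:ℂ) Rb := by
    intro m
    rw [Metric.mem_closedBall, dist_zero_right, Complex.norm_eq_abs]
    exact hRb (sq m) (hsqmem m).1.1 (hsqmem m).1.2 (zs m) (hzsroot m)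
  obtain ⟨zb, -, φ, hφmono, hztend⟩ :=
    tendsto_subseq_of_bounded Metric.isBounded_closedBall hzsball
  have hσstend : Filter.Tendsto (fun m => sq (φ m)) Filter.atTop (nhds (sInf Bad)) :=
    hsqtend.comp hφmono.tendsto_atTop
  have hev : eval zb (hfam k a x u (sInf Bad)) = 0 := by
    have hjoint : Filter.Tendsto (fun m => (sq (φ m), zs (φ m))) Filter.atTop
        (nhds (sInf Bad, zb)) := hσstend.prodMk_nhds hztend
    have hcomp := ((continuous_hfam_eval k a x u).tendsto (sInf Bad, zb)).comp hjoint
    have hzero : (fun m => eval (zs (φ m)) (hfam k a x u (sq (φ m)))) = fun _ => (0:ℂ) := by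
      funext m
      exact (mem_roots_hfam hca).mp (hzsroot (φ m))
    have hcomp' : Filter.Tendsto (fun _ : ℕ => (0:ℂ)) Filter.atTop
        (nhds (eval zb (hfam k a x u (sInf Bad)))) := by
      rw [← hzero]
      exact hcomp
    exact tendsto_nhds_unique hcomp' tendsto_const_nhds
  have hzbim : 0 ≤ zb.im := by
    have htend : Filter.Tendsto (fun m => (zs (φ m)).im) Filter.atTop (nhds zb.im) :=
      (Complex.continuous_im.tendsto _).comp hztend
    exact le_of_tendsto_of_tendsto' tendsto_const_nhds htend (fun m => hzsim (φ m))
  have hσs0 : 0 ≤ sInf Bad := le_csInf hBadne fun σ hσ => hσ.1.1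
  have hσs1 : sInf Bad ≤ 1 := (csInf_le hBadbdd hσ₀mem).trans hσ₀1
  have hzbroot : zb ∈ (hfam k a x u (sInf Bad)).roots := (mem_roots_hfam hca).mpr hev
  have hzbpos : 0 < zb.im := by
    rcases hzbim.lt_or_eq with h | h
    · exact h
    · exact absurd hev (hfam_ne_zero_of_real hkn a x (sInf Bad) huim h.symm)
  have hσspos : 0 < sInf Bad := by
    rcases hσs0.lt_or_eq with h | h
    · exact h
    · exfalso
      have hzb0 : zb ∈ (hfam k a x u 0).roots := by rw [h]; exact hzbroot
      exact absurd (hfam_zero_root_im hk1 hkn a x ha hu hzb0) (not_lt.mpr hzbim)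
  -- approach from strictly below
  set σl : ℕ → ℝ := fun m => sInf Bad * (1 - 1 / (m + 2)) with hσldef
  have hfra : ∀ m : ℕ, 0 < 1 / ((m:ℝ) + 2) := by
    intro m; positivity
  have hfrb : ∀ m : ℕ, 1 / ((m:ℝ) + 2) ≤ 1 := by
    intro m
    rw [div_le_one (by positivity)]
    linarith [Nat.cast_nonneg (α := ℝ) m]
  have hσl0 : ∀ m, 0 ≤ σl m := by
    intro m
    exact mul_nonneg hσs0 (by linarith [hfrb m])
  have hσllt : ∀ m, σl m < sInf Bad := by
    intro m
    have : 1 - 1 / ((m:ℝ) + 2) < 1 := by linarith [hfra m]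
    calc σl m < sInf Bad * 1 := by
          exact mul_lt_mul_of_pos_left this hσspos
      _ = sInf Bad := mul_one _
  have hσl1 : ∀ m, σl m ≤ 1 := fun m => ((hσllt m).le.trans hσs1)
  have hσlnmem : ∀ m, σl m ∉ Bad := by
    intro m hmem
    exact absurd (csInf_le hBadbdd hmem) (not_le.mpr (hσllt m))
  have hσlroots : ∀ m, ∀ z ∈ (hfam k a x u (σl m)).roots, z.im ≤ 0 := by
    intro m z hz
    by_contra hpos
    push_neg at hpos
    exact hσlnmem m ⟨⟨hσl0 m, hσl1 m⟩, z, hz, hpos.le⟩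
  have hLpos : 0 < Complex.abs ((sres Finset.univ k a : ℝ) : ℂ) * zb.im ^ k := by
    refine mul_pos (AbsoluteValue.pos _ (by exact_mod_cast hka)) (pow_pos hzbpos k)
  have hlow : ∀ m, Complex.abs ((sres Finset.univ k a : ℝ) : ℂ) * zb.im ^ k
      ≤ Complex.abs (eval zb (hfam k a x u (σl m))) := by
    intro m
    have h1 := eval_abs_lower (card_roots_hfam k a x u (σl m)) (hσlroots m) hzbim
    rw [leadingCoeff_hfam a x u (σl m) hca, natDegree_hfam a x u (σl m) hca] at h1
    exact h1
  have hσltend : Filter.Tendsto σl Filter.atTop (nhds (sInf Bad)) := by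
    have h2 : Filter.Tendsto (fun m : ℕ => 1 / ((m:ℝ) + 2)) Filter.atTop (nhds 0) := by
      apply Filter.Tendsto.div_atTop (tendsto_const_nhds)
      exact Filter.tendsto_atTop_add_const_right _ 2 tendsto_natCast_atTop_atTop
    have h3 : Filter.Tendsto (fun m : ℕ => sInf Bad * (1 - 1 / ((m:ℝ) + 2)))
        Filter.atTop (nhds (sInf Bad * (1 - 0))) :=
      Filter.Tendsto.const_mul _ (tendsto_const_nhds.sub h2)
    rw [hσldef]
    convert h3 using 2
    ring
  have hevaltend : Filter.Tendsto (fun m => eval zb (hfam k a x u (σl m))) Filter.atTop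
      (nhds 0) := by
    have hjoint : Filter.Tendsto (fun m => (σl m, zb)) Filter.atTop
        (nhds (sInf Bad, zb)) := hσltend.prodMk_nhds tendsto_const_nhds
    have hcomp := ((continuous_hfam_eval k a x u).tendsto (sInf Bad, zb)).comp hjoint
    rw [show (fun p : ℝ × ℂ => eval p.2 (hfam k a x u p.1)) ∘ (fun m => (σl m, zb))
        = fun m => eval zb (hfam k a x u (σl m)) from rfl, hev] at hcomp
    exact hcomp
  have habstend : Filter.Tendsto (fun m => Complex.abs (eval zb (hfam k a x u (σl m))))
      Filter.atTop (nhds 0) := by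
    have := (Complex.continuous_abs.tendsto 0).comp hevaltend
    simpa [Function.comp_def] using this
  have hcontra := le_of_tendsto_of_tendsto' tendsto_const_nhds habstend hlow
  exact absurd hcontra (not_le.mpr hLpos)

theorem continuous_hfam_eval_u (k : ℕ) (a x : Fin n → ℝ) (w : ℂ) :
    Continuous (fun u : ℂ => eval w (hfam k a x u 1)) := by
  have heq : (fun u : ℂ => eval w (hfam k a x u 1))
      = fun u : ℂ => ∑ S ∈ Finset.powersetCard k (Finset.univ : Finset (Fin n)),
          ∏ i ∈ S, ((a i : ℂ) * w + ((((1:ℝ) * x i : ℝ) : ℂ) + u)) := by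
    funext u
    rw [hfam, eval_gpoly]
  rw [heq]
  exact continuous_finset_sum _ fun S _ => continuous_finset_prod _ fun i _ =>
    continuous_const.add (continuous_const.add continuous_id)

theorem map_gpoly_eq_hfam (k : ℕ) (a x : Fin n → ℝ) :
    (gpoly Finset.univ k a x).map Complex.ofRealHom = hfam k a x 0 1 := by
  rw [map_gpoly, hfam]
  have h1 : (fun i : Fin n => Complex.ofRealHom (a i)) = fun i : Fin n => ((a i : ℝ) : ℂ) := by
    funext i; simp [Complex.ofRealHom_eq_coe]
  have h2 : (fun i : Fin n => Complex.ofRealHom (x i))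
      = fun i : Fin n => ((((1:ℝ) * x i : ℝ)) : ℂ) + 0 := by
    funext i; simp [Complex.ofRealHom_eq_coe]
  rw [h1, h2]

theorem root_map_gpoly_im_zero {k : ℕ} (hk1 : 1 ≤ k) (hkn : k ≤ n) (a x : Fin n → ℝ)
    (ha : ∀ j, 1 ≤ j → j ≤ k → 0 < sres Finset.univ j a) {z : ℂ}
    (hz : z ∈ ((gpoly Finset.univ k a x).map Complex.ofRealHom).roots) : z.im = 0 := by
  have hka : sres Finset.univ k a ≠ 0 := (ha k hk1 le_rfl).ne'
  have hca : sres Finset.univ k (fun i => (a i : ℂ)) ≠ 0 := by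
    rw [sres_cast]; exact_mod_cast hka
  have hmapne : (gpoly Finset.univ k a x).map Complex.ofRealHom ≠ 0 := by
    rw [map_gpoly_eq_hfam]
    exact hfam_ne_zero k a x 0 1 hca
  have him_le : ∀ w ∈ ((gpoly Finset.univ k a x).map Complex.ofRealHom).roots, w.im ≤ 0 := by
    intro w hw
    by_contra hpos
    push_neg at hpos
    have hweval : eval w ((gpoly Finset.univ k a x).map Complex.ofRealHom) = 0 :=
      (mem_roots hmapne).mp hw
    set um : ℕ → ℂ := fun m => Complex.I * ((((m:ℝ) + 1)⁻¹ : ℝ) : ℂ) with humdef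
    have humim : ∀ m, 0 < (um m).im := by
      intro m
      simp only [humdef, Complex.mul_im, Complex.I_re, Complex.I_im, Complex.ofReal_re,
        Complex.ofReal_im, zero_mul, one_mul, mul_zero, add_zero, zero_add]
      positivity
    have humtend : Filter.Tendsto um Filter.atTop (nhds 0) := by
      have h2 : Filter.Tendsto (fun m : ℕ => (((m:ℝ) + 1)⁻¹ : ℝ)) Filter.atTop (nhds 0) :=
        tendsto_inv_atTop_zero.comp (Filter.tendsto_atTop_add_const_right _ 1 tendsto_natCast_atTop_atTop)
      have h3 : Filter.Tendsto (fun m : ℕ => ((((m:ℝ) + 1)⁻¹ : ℝ) : ℂ)) Filter.atTop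
          (nhds ((0:ℝ):ℂ)) := (Complex.continuous_ofReal.tendsto _).comp h2
      have h4 := h3.const_mul Complex.I
      rw [humdef]
      have h5 : Complex.I * (((0:ℝ)):ℂ) = 0 := by simp
      rw [← h5]
      exact h4
    have hroots_m : ∀ m, ∀ ζ ∈ (hfam k a x (um m) 1).roots, ζ.im ≤ 0 := by
      intro m ζ hζ
      exact (hfam_roots_im_neg hk1 hkn a x ha (humim m) 1 zero_le_one le_rfl ζ hζ).le
    have hlow : ∀ m, Complex.abs ((sres Finset.univ k a : ℝ) : ℂ) * w.im ^ k
        ≤ Complex.abs (eval w (hfam k a x (um m) 1)) := by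
      intro m
      have h1 := eval_abs_lower (card_roots_hfam k a x (um m) 1) (hroots_m m) hpos.le
      rw [leadingCoeff_hfam a x (um m) 1 hca, natDegree_hfam a x (um m) 1 hca] at h1
      exact h1
    have hevaltend : Filter.Tendsto (fun m => eval w (hfam k a x (um m) 1)) Filter.atTop
        (nhds 0) := by
      have hcomp := ((continuous_hfam_eval_u k a x w).tendsto 0).comp humtend
      rw [show (fun u : ℂ => eval w (hfam k a x u 1)) ∘ um
          = fun m => eval w (hfam k a x (um m) 1) from rfl] at hcomp
      rw [← map_gpoly_eq_hfam, hweval] at hcomp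
      exact hcomp
    have habstend : Filter.Tendsto (fun m => Complex.abs (eval w (hfam k a x (um m) 1)))
        Filter.atTop (nhds 0) := by
      have := (Complex.continuous_abs.tendsto 0).comp hevaltend
      simpa [Function.comp_def] using this
    have hLpos : 0 < Complex.abs ((sres Finset.univ k a : ℝ) : ℂ) * w.im ^ k :=
      mul_pos (AbsoluteValue.pos _ (by exact_mod_cast hka)) (pow_pos hpos k)
    have hcontra := le_of_tendsto_of_tendsto' tendsto_const_nhds habstend hlow
    exact absurd hcontra (not_le.mpr hLpos)
  have h1 := him_le z hz
  have hzconj : (starRingEnd ℂ) z ∈ ((gpoly Finset.univ k a x).map Complex.ofRealHom).roots := by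
    refine (mem_roots hmapne).mpr ?_
    show eval _ _ = 0
    rw [eval_conj_map, (mem_roots hmapne).mp hz]
    exact map_zero _
  have h2 := him_le _ hzconj
  rw [Complex.conj_im] at h2
  linarith

end Homotopy

section MultisetHelpers

theorem esymm_map_hom {R S : Type*} [CommSemiring R] [CommSemiring S] (f : R →+* S)
    (ρ : Multiset R) (m : ℕ) :
    (ρ.map ⇑f).esymm m = f (ρ.esymm m) := by
  unfold Multiset.esymm
  rw [Multiset.powersetCard_map, Multiset.map_map, map_multiset_sum, Multiset.map_map]
  refine congrArg Multiset.sum (Multiset.map_congr rfl fun t _ => ?_)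
  simp [map_multiset_prod]

theorem esymm_neg_multiset (ρ : Multiset ℝ) (m : ℕ) :
    (ρ.map (fun r => -r)).esymm m = (-1) ^ m * ρ.esymm m := by
  unfold Multiset.esymm
  rw [Multiset.powersetCard_map, Multiset.map_map]
  have h1 : Multiset.map (Multiset.prod ∘ Multiset.map fun r : ℝ => -r)
      (Multiset.powersetCard m ρ)
      = Multiset.map (fun t : Multiset ℝ => (-1:ℝ) ^ m * t.prod) (Multiset.powersetCard m ρ) := by
    refine Multiset.map_congr rfl fun t ht => ?_
    rw [Function.comp_apply]
    have hcard := (Multiset.mem_powersetCard.mp ht).2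
    have := Multiset.prod_map_neg t
    rw [show Multiset.map (fun r : ℝ => -r) t = Multiset.map Neg.neg t from rfl, this, hcard]
  rw [h1, Multiset.sum_map_mul_left]

theorem esymm_nonneg_multiset (q : Multiset ℝ) (h : ∀ r ∈ q, 0 ≤ r) (m : ℕ) :
    0 ≤ q.esymm m := by
  refine Multiset.sum_nonneg fun x hx => ?_
  obtain ⟨t, ht, rfl⟩ := Multiset.mem_map.mp hx
  have hle := (Multiset.mem_powersetCard.mp ht).1
  exact Multiset.prod_nonneg fun r hr => h r (Multiset.mem_of_le hle hr)

theorem esymm_pos_multiset (q : Multiset ℝ) (h : ∀ r ∈ q, 0 < r) {m : ℕ}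
    (hm : m ≤ Multiset.card q) : 0 < q.esymm m := by
  have hne : (Multiset.powersetCard m q).map Multiset.prod ≠ 0 := by
    rw [Ne, Multiset.map_eq_zero, ← Multiset.card_eq_zero, Multiset.card_powersetCard]
    exact (Nat.choose_pos hm).ne'
  obtain ⟨x, hx⟩ := Multiset.exists_mem_of_ne_zero hne
  have hxpos : 0 < x := by
    obtain ⟨t, ht, rfl⟩ := Multiset.mem_map.mp hx
    have hle := (Multiset.mem_powersetCard.mp ht).1
    exact Multiset.prod_pos fun r hr => h r (Multiset.mem_of_le hle hr)
  have hall : ∀ y ∈ (Multiset.powersetCard m q).map Multiset.prod, 0 ≤ y := by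
    intro y hy
    obtain ⟨t, ht, rfl⟩ := Multiset.mem_map.mp hy
    have hle := (Multiset.mem_powersetCard.mp ht).1
    exact Multiset.prod_nonneg fun r hr => (h r (Multiset.mem_of_le hle hr)).le
  exact lt_of_lt_of_le hxpos (Multiset.single_le_sum hall x hx)

end MultisetHelpers

section RealSide

variable {n : ℕ}

/-- the coefficient polynomials in `T` -/
noncomputable def Xi (k : ℕ) (a b : Fin n → ℝ) (j : ℕ) : ℝ[X] :=
  ∑ A ∈ Finset.powersetCard j (Finset.univ : Finset (Fin n)),
    C (∏ i ∈ A, a i) * gpoly (Finset.univ \ A) (k - j) (fun _ => 1) b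

theorem eval_gpoly_one_shift {ι : Type*} [DecidableEq ι] (E : Finset ι) (r : ℕ)
    (y : ι → ℝ) (T : ℝ) :
    eval T (gpoly E r (fun _ => 1) y) = sres E r (fun i => y i + T) := by
  rw [eval_gpoly, sres]
  exact Finset.sum_congr rfl fun S _ => Finset.prod_congr rfl fun i _ => by ring

theorem coeff_gT (k : ℕ) (a b : Fin n → ℝ) (T : ℝ) {j : ℕ} (hj : j ≤ k) :
    (gpoly Finset.univ k a (fun i => b i + T)).coeff j = eval T (Xi k a b j) := by
  rw [coeff_gpoly _ hj, Xi, eval_finset_sum]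
  refine Finset.sum_congr rfl fun A _ => ?_
  rw [eval_mul, eval_C, eval_gpoly_one_shift]

theorem coeff_Xi_top (k : ℕ) (a b : Fin n → ℝ) {j : ℕ} (hj : j ≤ k) :
    (Xi k a b j).coeff (k - j) = ((n - j).choose (k - j) : ℝ) * sres Finset.univ j a := by
  rw [Xi, finset_sum_coeff, sres, Finset.mul_sum]
  refine Finset.sum_congr rfl fun A hA => ?_
  obtain ⟨hAU, hAc⟩ := Finset.mem_powersetCard.mp hA
  rw [coeff_C_mul, coeff_gpoly_self, sres_one, Finset.card_sdiff_of_subset hAU, card_univ_fin, hAc]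
  ring

theorem natDegree_Xi_le (k : ℕ) (a b : Fin n → ℝ) (j : ℕ) :
    (Xi k a b j).natDegree ≤ k - j := by
  refine natDegree_sum_le_of_forall_le _ _ fun A _ => ?_
  exact le_trans (natDegree_C_mul_le _ _) (natDegree_gpoly_le _ _ _ _)

theorem gpoly_zero {ι : Type*} [DecidableEq ι] {R : Type*} [CommRing R] (E : Finset ι)
    (α β : ι → R) : gpoly E 0 α β = 1 := by
  simp [gpoly]

theorem eval_Xi_k (k : ℕ) (a b : Fin n → ℝ) (T : ℝ) :
    eval T (Xi k a b k) = sres Finset.univ k a := by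
  rw [Xi, eval_finset_sum, sres]
  refine Finset.sum_congr rfl fun A _ => ?_
  rw [Nat.sub_self, gpoly_zero, mul_one, eval_C]

end RealSide

section Main

variable {n : ℕ}

theorem key_add (k : ℕ) (hk1 : 1 ≤ k) (hkn : k ≤ n) (a b : Fin n → ℝ)
    (ha : ∀ j, 1 ≤ j → j ≤ k → 0 < sres Finset.univ j a)
    (hb : ∀ j, 1 ≤ j → j ≤ k → 0 < sres Finset.univ j b) :
    0 < sres Finset.univ k (fun i => a i + b i) := by
  have hka : sres Finset.univ k a ≠ 0 := (ha k hk1 le_rfl).ne'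
  have ha' : ∀ j, j ≤ k → 0 < sres Finset.univ j a := by
    intro j hj
    rcases Nat.eq_zero_or_pos j with h | h
    · subst h; rw [sres_zero]; norm_num
    · exact ha j h hj
  have hXitop : ∀ j, j ≤ k → 0 < (Xi k a b j).coeff (k - j) := by
    intro j hj
    rw [coeff_Xi_top k a b hj]
    refine mul_pos ?_ (ha' j hj)
    have : 0 < (n - j).choose (k - j) := Nat.choose_pos (by omega)
    exact_mod_cast this
  have hXine : ∀ j, j ≤ k → Xi k a b j ≠ 0 := by
    intro j hj h0
    have := hXitop j hj
    rw [h0, coeff_zero] at this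
    exact lt_irrefl _ this
  have hXind : ∀ j, j ≤ k → (Xi k a b j).natDegree = k - j := fun j hj =>
    le_antisymm (natDegree_Xi_le k a b j) (le_natDegree_of_ne_zero (hXitop j hj).ne')
  have hT₀ex : ∃ T₀ : ℝ, 0 ≤ T₀ ∧ ∀ T, T₀ ≤ T → ∀ j, j ≤ k → 0 < eval T (Xi k a b j) := by
    have hev : ∀ᶠ T in Filter.atTop, ∀ j ∈ Finset.range k, 0 < eval T (Xi k a b j) := by
      rw [Finset.eventually_all]
      intro j hj
      have hjk := Finset.mem_range.mp hj
      have htd : Filter.Tendsto (fun T => eval T (Xi k a b j)) Filter.atTop Filter.atTop := by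
        apply tendsto_atTop_of_leadingCoeff_nonneg
        · rw [degree_eq_natDegree (hXine j hjk.le), hXind j hjk.le]
          exact_mod_cast Nat.sub_pos_of_lt hjk
        · rw [leadingCoeff, hXind j hjk.le]
          exact (hXitop j hjk.le).le
      exact htd.eventually_gt_atTop 0
    obtain ⟨T₁, hT₁⟩ := Filter.eventually_atTop.mp hev
    refine ⟨max T₁ 0, le_max_right _ _, fun T hT j hj => ?_⟩
    rcases hj.lt_or_eq with hlt | heq
    · exact hT₁ T (le_trans (le_max_left _ _) hT) j (Finset.mem_range.mpr hlt)
    · subst heq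
      rw [eval_Xi_k]
      exact ha' _ le_rfl
  obtain ⟨T₀, hT₀0, hT₀big⟩ := hT₀ex
  set Sbad : Set ℝ := {T | (0 ≤ T ∧ T ≤ T₀) ∧ ∃ j, j ≤ k ∧ eval T (Xi k a b j) ≤ 0}
    with hSbaddef
  have hSempty : Sbad = ∅ := by
    by_contra hne
    have hne' : Sbad.Nonempty := Set.nonempty_iff_ne_empty.mpr hne
    have hSeq : Sbad = Set.Icc 0 T₀ ∩
        ⋃ j ∈ Finset.range (k+1), {T : ℝ | eval T (Xi k a b j) ≤ 0} := by
      ext T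
      simp only [hSbaddef, Set.mem_setOf_eq, Set.mem_inter_iff, Set.mem_Icc, Set.mem_iUnion,
        Finset.mem_range, exists_prop]
      constructor
      · rintro ⟨⟨h1, h2⟩, j, hj, hle⟩
        exact ⟨⟨h1, h2⟩, j, by omega, hle⟩
      · rintro ⟨⟨h1, h2⟩, j, hj, hle⟩
        exact ⟨⟨h1, h2⟩, j, by omega, hle⟩
    have hclosed : IsClosed Sbad := by
      rw [hSeq]
      refine isClosed_Icc.inter ?_
      refine Set.Finite.isClosed_biUnion (Finset.range (k+1)).finite_toSet fun j _ => ?_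
      exact isClosed_le (Polynomial.continuous _) continuous_const
    have hcpt : IsCompact Sbad :=
      IsCompact.of_isClosed_subset isCompact_Icc hclosed
        (by rw [hSeq]; exact Set.inter_subset_left)
    have hTsmem := hcpt.sSup_mem hne'
    set Ts := sSup Sbad with hTsdef
    obtain ⟨⟨hTs0, hTsT₀⟩, js, hjsk, hjsle⟩ := hTsmem
    have hge : ∀ j, j ≤ k → 0 ≤ eval Ts (Xi k a b j) := by
      intro j hj
      have hseq : ∀ m : ℕ, 0 < eval (Ts + 1/(m+1)) (Xi k a b j) := by
        intro m
        have hstep : 0 < 1/((m:ℝ)+1) := by positivity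
        rcases le_or_gt (Ts + 1/(m+1)) T₀ with hle | hlt
        · by_contra hc
          push_neg at hc
          have hmem : Ts + 1/(m+1) ∈ Sbad := ⟨⟨by linarith, hle⟩, j, hj, hc⟩
          have := le_csSup hcpt.bddAbove hmem
          rw [← hTsdef] at this
          linarith
        · exact hT₀big _ (by linarith) j hj
      have htendT : Filter.Tendsto (fun m : ℕ => Ts + 1/(m+1)) Filter.atTop (nhds Ts) := by
        have h2 : Filter.Tendsto (fun m : ℕ => 1/((m:ℝ)+1)) Filter.atTop (nhds 0) := by
          apply Filter.Tendsto.div_atTop tendsto_const_nhds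
          exact Filter.tendsto_atTop_add_const_right _ 1 tendsto_natCast_atTop_atTop
        simpa using tendsto_const_nhds.add h2
      have htendeval : Filter.Tendsto (fun m : ℕ => eval (Ts + 1/(m+1)) (Xi k a b j))
          Filter.atTop (nhds (eval Ts (Xi k a b j))) :=
        ((Polynomial.continuous (Xi k a b j)).tendsto Ts).comp htendT
      exact le_of_tendsto_of_tendsto' tendsto_const_nhds htendeval fun m => (hseq m).le
    have hjsltk : js < k := by
      rcases hjsk.lt_or_eq with h | h
      · exact h
      · exfalso
        rw [h, eval_Xi_k] at hjsle
        exact absurd hjsle (not_le.mpr (ha' k le_rfl))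
    set g : ℝ[X] := gpoly Finset.univ k a (fun i => b i + Ts) with hgdef
    set p : ℂ[X] := g.map Complex.ofRealHom with hpdef
    have hpne : p ≠ 0 := by
      rw [hpdef, Polynomial.map_ne_zero_iff Complex.ofRealHom.injective, hgdef]
      exact gpoly_ne_zero _ _ _ _ hka
    have hgnd : g.natDegree = k := by rw [hgdef]; exact natDegree_gpoly_eq _ _ _ _ hka
    have hpnd : p.natDegree = k := by
      rw [hpdef, natDegree_map_eq_of_injective Complex.ofRealHom.injective, hgnd]
    have hpcard : Multiset.card p.roots = p.natDegree :=
      splits_iff_card_roots.mp (IsAlgClosed.splits _)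
    have hpim : ∀ z ∈ p.roots, z.im = 0 := by
      intro z hz
      exact root_map_gpoly_im_zero hk1 hkn a (fun i => b i + Ts) ha hz
    have hg0 : 0 < g.coeff 0 := by
      rw [hgdef, coeff_gpoly _ (Nat.zero_le k)]
      rw [Finset.powersetCard_zero, Finset.sum_singleton]
      simp only [Finset.prod_empty, one_mul, Finset.sdiff_empty, Nat.sub_zero]
      rw [← eval_gpoly_one_shift]
      exact eval_gpoly_one_pos hkn b hb hTs0
    have hgcoeff_nonneg : ∀ j, j ≤ k → 0 ≤ g.coeff j := by
      intro j hj
      rw [hgdef, coeff_gT k a b Ts hj]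
      exact hge j hj
    have hre : ∀ z ∈ p.roots, z.re ≤ 0 := by
      intro z hzr
      by_contra hposre
      push_neg at hposre
      have hzim := hpim z hzr
      have hzeq : z = ((z.re : ℝ) : ℂ) := by
        apply Complex.ext <;> simp [hzim]
      have hzeval : eval z p = 0 := (mem_roots hpne).mp hzr
      rw [hzeq, hpdef, eval_map,
        show ((z.re : ℝ) : ℂ) = Complex.ofRealHom z.re from rfl, eval₂_at_apply] at hzeval
      have hgpos : (0:ℝ) < eval z.re g := by
        refine eval_pos_of_coeff_nonneg g (fun j hj => hgcoeff_nonneg j ?_) hg0 hposre.le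
        rw [hgnd] at hj
        exact hj
      have : eval z.re g = 0 := by
        have h' : ((eval z.re g : ℝ) : ℂ) = 0 := hzeval
        exact_mod_cast h'
      exact absurd this hgpos.ne'
    have hfac := C_leadingCoeff_mul_prod_multiset_X_sub_C hpcard
    have hcoeffjs : p.coeff js
        = p.leadingCoeff * ((-1)^(k - js) * p.roots.esymm (k - js)) := by
      conv_lhs => rw [← hfac]
      rw [coeff_C_mul]
      congr 1
      have hv := Multiset.prod_X_sub_C_coeff p.roots (k := js)
        (by rw [hpcard, hpnd]; exact hjsk)
      rw [hv, hpcard, hpnd]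
    set ρ : Multiset ℝ := p.roots.map Complex.re with hρdef
    have hcardρ : Multiset.card ρ = k := by rw [hρdef, Multiset.card_map, hpcard, hpnd]
    have hrootseq : p.roots = ρ.map (fun r : ℝ => (r : ℂ)) := by
      rw [hρdef, Multiset.map_map]
      have h1 : p.roots.map ((fun r : ℝ => (r:ℂ)) ∘ Complex.re) = p.roots.map id := by
        refine Multiset.map_congr rfl fun z hz => ?_
        simp only [Function.comp_apply, id]
        apply Complex.ext
        · simp
        · simp [hpim z hz]
      rw [h1, Multiset.map_id]
    have hesymm : p.roots.esymm (k - js) = ((ρ.esymm (k - js) : ℝ) : ℂ) := by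
      rw [hrootseq]
      rw [show ρ.map (fun r : ℝ => (r:ℂ)) = ρ.map ⇑Complex.ofRealHom from
        Multiset.map_congr rfl fun r _ => rfl]
      rw [esymm_map_hom Complex.ofRealHom ρ (k - js)]
      rfl
    have hplc : p.leadingCoeff = ((sres Finset.univ k a : ℝ) : ℂ) := by
      rw [leadingCoeff, hpnd, hpdef, coeff_map, hgdef, coeff_gpoly_self]
      rfl
    have hpcjs : p.coeff js = ((eval Ts (Xi k a b js) : ℝ) : ℂ) := by
      rw [hpdef, coeff_map, hgdef, coeff_gT k a b Ts hjsk]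
      rfl
    have hreal : eval Ts (Xi k a b js)
        = sres Finset.univ k a * ((-1)^(k - js) * ρ.esymm (k - js)) := by
      have hthis := hcoeffjs
      rw [hpcjs, hplc, hesymm] at hthis
      have hcast : (((sres Finset.univ k a : ℝ)) : ℂ)
            * (((-1):ℂ)^(k-js) * ((ρ.esymm (k-js) : ℝ) : ℂ))
          = (((sres Finset.univ k a * ((-1)^(k-js) * ρ.esymm (k-js))) : ℝ) : ℂ) := by
        push_cast
        ring
      rw [hcast] at hthis
      exact_mod_cast hthis
    set q : Multiset ℝ := ρ.map (fun r => -r) with hqdef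
    have hqnonneg : ∀ r ∈ q, 0 ≤ r := by
      intro r hr
      obtain ⟨s', hs', rfl⟩ := Multiset.mem_map.mp hr
      rw [hρdef] at hs'
      obtain ⟨z, hz, rfl⟩ := Multiset.mem_map.mp hs'
      simpa using hre z hz
    have hqe : (-1:ℝ)^(k - js) * ρ.esymm (k - js) = q.esymm (k - js) := by
      rw [hqdef, esymm_neg_multiset]
    have hqle : q.esymm (k - js) ≤ 0 := by
      have h1 : sres Finset.univ k a * q.esymm (k - js) ≤ 0 := by
        rw [← hqe, ← hreal]
        exact hjsle
      by_contra hposq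
      push_neg at hposq
      nlinarith [ha' k le_rfl]
    have hqzero : q.esymm (k - js) = 0 :=
      le_antisymm hqle (esymm_nonneg_multiset q hqnonneg _)
    have hqcard : Multiset.card q = k := by rw [hqdef, Multiset.card_map, hcardρ]
    have hex0 : ∃ r ∈ q, r = 0 := by
      by_contra hno
      push_neg at hno
      have hallpos : ∀ r ∈ q, 0 < r := fun r hr =>
        lt_of_le_of_ne (hqnonneg r hr) (Ne.symm (hno r hr))
      have := esymm_pos_multiset q hallpos (m := k - js) (by rw [hqcard]; omega)
      rw [hqzero] at this
      exact lt_irrefl _ this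
    obtain ⟨r, hrq, hr0⟩ := hex0
    have h0root : (0:ℂ) ∈ p.roots := by
      rw [hrootseq]
      rw [hqdef] at hrq
      obtain ⟨s', hs', hsr⟩ := Multiset.mem_map.mp hrq
      have hs0 : s' = 0 := by rw [hr0] at hsr; linarith
      refine Multiset.mem_map.mpr ⟨s', hs', ?_⟩
      rw [hs0]
      simp
    have hev0 : eval 0 p = 0 := isRoot_of_mem_roots h0root
    rw [← coeff_zero_eq_eval_zero, hpdef, coeff_map] at hev0
    have hg00 : g.coeff 0 = 0 := by
      have h' : ((g.coeff 0 : ℝ) : ℂ) = 0 := hev0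
      exact_mod_cast h'
    exact absurd hg00 hg0.ne'
  have hallpos0 : ∀ j, j ≤ k → 0 < eval 0 (Xi k a b j) := by
    intro j hj
    by_contra hc
    push_neg at hc
    have hmem : (0:ℝ) ∈ Sbad := ⟨⟨le_rfl, hT₀0⟩, j, hj, hc⟩
    rw [hSempty] at hmem
    exact hmem
  have hnd0 : (gpoly Finset.univ k a (fun i => b i + 0)).natDegree = k :=
    natDegree_gpoly_eq _ _ _ _ hka
  have hpos1 : 0 < eval 1 (gpoly Finset.univ k a (fun i => b i + 0)) := by
    rw [eval_eq_sum_range, hnd0]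
    refine Finset.sum_pos (fun i hi => ?_) ⟨0, Finset.mem_range.mpr (by omega)⟩
    have hik : i ≤ k := by
      have := Finset.mem_range.mp hi
      omega
    rw [one_pow, mul_one, coeff_gT k a b 0 hik]
    exact hallpos0 i hik
  have hfinal : eval 1 (gpoly Finset.univ k a (fun i => b i + 0))
      = sres Finset.univ k (fun i => a i + b i) := by
    rw [eval_gpoly, sres]
    exact Finset.sum_congr rfl fun S _ => Finset.prod_congr rfl fun i _ => by ring
  rwa [hfinal] at hpos1

theorem sres_smul (j : ℕ) (c : ℝ) (x : Fin n → ℝ) :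
    sres Finset.univ j (fun i => c * x i) = c ^ j * sres Finset.univ j x := by
  unfold sres
  rw [Finset.mul_sum]
  refine Finset.sum_congr rfl fun B hB => ?_
  have hBc := (Finset.mem_powersetCard.mp hB).2
  rw [Finset.prod_mul_distrib, Finset.prod_const, hBc]

end Main

end Garding

/-- For every `1 ≤ k ≤ n`, the Gårding cone `Γₖ` is convex. -/
theorem gardingCone_convex {n k : ℕ} (hk1 : 1 ≤ k) (hkn : k ≤ n) :
    Convex ℝ (gardingCone n k) := by
  intro κ hκ μ hμ s t hs ht hst
  rcases eq_or_lt_of_le hs with hs0 | hs0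
  · have ht1 : t = 1 := by linarith
    simpa [← hs0, ht1] using hμ
  rcases eq_or_lt_of_le ht with ht0 | ht0
  · have hs1 : s = 1 := by linarith
    simpa [← ht0, hs1] using hκ
  intro j hj1 hjk
  have hj_n : j ≤ n := le_trans hjk hkn
  have hsres : ∀ m (x : Fin n → ℝ), Garding.sres Finset.univ m x = esymm n m x :=
    fun m x => rfl
  have hκ' : ∀ m, 1 ≤ m → m ≤ j → 0 < Garding.sres Finset.univ m (fun i => s * κ i) := by
    intro m hm1 hmj
    rw [Garding.sres_smul, hsres]
    exact mul_pos (pow_pos hs0 m) (hκ m hm1 (le_trans hmj hjk))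
  have hμ' : ∀ m, 1 ≤ m → m ≤ j → 0 < Garding.sres Finset.univ m (fun i => t * μ i) := by
    intro m hm1 hmj
    rw [Garding.sres_smul, hsres]
    exact mul_pos (pow_pos ht0 m) (hμ m hm1 (le_trans hmj hjk))
  have h := Garding.key_add j hj1 hj_n (fun i => s * κ i) (fun i => t * μ i) hκ' hμ'
  have heq : esymm n j (s • κ + t • μ)
      = Garding.sres Finset.univ j (fun i => s * κ i + t * μ i) := rfl
  rw [heq]
  exact h
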